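/- Suppose X ∈ ℝ^d satisfies X_j = X_1 for all j, E[X_1²] = 1, Y = X_1, and P ∼ Bernoulli(1/2)^{⊗d} independent of X. Then for θ₂ = (2/d, …, 2/d)ᵀ, the imputed risk satisfies E[(Y − θ₂ᵀ(P⊙X))²] = 1/d; in particular the zero-imputation bias over linear predictors is at most 1/d. -/

import Mathlib

open MeasureTheory ProbabilityTheory

theorem stmt8 {Ω : Type*} {mΩ : MeasurableSpace Ω} (μ : Measure Ω) [IsProbabilityMeasure μ]
    {d : ℕ} (hd : 0 < d) (X P : Ω → Fin d → ℝ)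
    (hXm : Measurable X) (hPm : Measurable P)
    (hXeq : ∀ ω j, X ω j = X ω ⟨0, hd⟩)
    (hX2int : MemLp (fun ω => X ω ⟨0, hd⟩) 2 μ)
    (hX2 : ∫ ω, (X ω ⟨0, hd⟩) ^ 2 ∂μ = 1)
    (hP01 : ∀ ω j, P ω j = 0 ∨ P ω j = 1)
    (hρ : ∀ j, (μ {ω | P ω j = 1}).toReal = 1 / 2)
    (hiid : iIndepFun (fun j ω => P ω j) μ)
    (hindep : IndepFun X P μ) :
    ∫ ω, (X ω ⟨0, hd⟩ - ∑ j, (2 / d : ℝ) * (P ω j * X ω j)) ^ 2 ∂μ = 1 / d := by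
  have hd' : (d : ℝ) ≠ 0 := Nat.cast_ne_zero.mpr hd.ne'
  set i0 : Fin d := ⟨0, hd⟩ with hi0
  set c : ℝ := 2 / d with hc
  have hPj : ∀ j, Measurable fun ω => P ω j := fun j => (measurable_pi_apply j).comp hPm
  -- E[P_j] = 1/2
  have hEP : ∀ j, ∫ ω, P ω j ∂μ = 1 / 2 := by
    intro j
    have hs : MeasurableSet {ω | P ω j = 1} := (hPj j) (measurableSet_singleton 1)
    have heq : (fun ω => P ω j) = Set.indicator {ω | P ω j = 1} fun _ => (1 : ℝ) := by
      funext ω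
      rcases hP01 ω j with h | h
      · rw [h, Set.indicator_of_notMem]
        simp [Set.mem_setOf_eq, h]
      · rw [h, Set.indicator_of_mem]
        exact h
    rw [heq, integral_indicator_const _ hs]
    simp [measureReal_def, hρ j]
  -- integrability
  have hPint : ∀ j, Integrable (fun ω => P ω j) μ := by
    intro j
    refine Integrable.mono' (integrable_const 1) (hPj j).aestronglyMeasurable ?_
    filter_upwards with ω
    rcases hP01 ω j with h | h <;> simp [h]
  have hPPint : ∀ j k, Integrable (fun ω => P ω j * P ω k) μ := by
    intro j k
    refine Integrable.mono' (integrable_const 1) ((hPj j).mul (hPj k)).aestronglyMeasurable ?_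
    filter_upwards with ω
    rcases hP01 ω j with h | h <;> rcases hP01 ω k with h' | h' <;> simp [h, h']
  -- E[P_j P_k]
  have hEPP : ∀ j k, ∫ ω, P ω j * P ω k ∂μ = if j = k then 1 / 2 else 1 / 4 := by
    intro j k
    by_cases hjk : j = k
    · subst hjk
      rw [if_pos rfl]
      have : (fun ω => P ω j * P ω j) = fun ω => P ω j := by
        funext ω; rcases hP01 ω j with h | h <;> simp [h]
      rw [this, hEP j]
    · rw [if_neg hjk]
      have hind := (hiid.indepFun hjk).integral_mul_eq_mul_integral (hPj j).aestronglyMeasurable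
        (hPj k).aestronglyMeasurable
      have : ∫ ω, P ω j * P ω k ∂μ = (∫ ω, P ω j ∂μ) * ∫ ω, P ω k ∂μ := hind
      rw [this, hEP j, hEP k]; norm_num
  -- rewrite integrand
  have key : ∫ ω, (X ω i0 - ∑ j, c * (P ω j * X ω j)) ^ 2 ∂μ
      = ∫ ω, (X ω i0) ^ 2 * (1 - ∑ j, c * P ω j) ^ 2 ∂μ := by
    refine integral_congr_ae (Filter.Eventually.of_forall fun ω => ?_)
    have hsum : ∑ j, c * (P ω j * X ω j) = (∑ j, c * P ω j) * X ω i0 := by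
      rw [Finset.sum_mul]
      exact Finset.sum_congr rfl fun j _ => by rw [hXeq ω j]; ring
    dsimp only
    rw [hsum]; ring
  -- independence of the two factors
  have hF : Measurable fun x : Fin d → ℝ => (x i0) ^ 2 :=
    (measurable_pi_apply i0).pow measurable_const
  have hG : Measurable fun p : Fin d → ℝ => (1 - ∑ j, c * p j) ^ 2 := by
    apply Measurable.pow _ measurable_const
    exact measurable_const.sub (Finset.measurable_sum _ fun j _ =>
      by fun_prop)
  have hFG : IndepFun (fun ω => (X ω i0) ^ 2) (fun ω => (1 - ∑ j, c * P ω j) ^ 2) μ :=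
    hindep.comp hF hG
  have hmul : ∫ ω, (X ω i0) ^ 2 * (1 - ∑ j, c * P ω j) ^ 2 ∂μ
      = (∫ ω, (X ω i0) ^ 2 ∂μ) * ∫ ω, (1 - ∑ j, c * P ω j) ^ 2 ∂μ :=
    hFG.integral_mul_eq_mul_integral (hF.comp hXm).aestronglyMeasurable (hG.comp hPm).aestronglyMeasurable
  -- compute the P-moment
  have hSint : Integrable (fun ω => ∑ j, c * P ω j) μ :=
    integrable_finset_sum _ fun j _ => (hPint j).const_mul c
  have hES : ∫ ω, ∑ j, c * P ω j ∂μ = 1 := by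
    rw [integral_finset_sum _ fun j _ => (hPint j).const_mul c]
    simp_rw [integral_const_mul, hEP]
    rw [Finset.sum_const, Finset.card_univ, Fintype.card_fin, nsmul_eq_mul, hc]
    field_simp
  have expand : ∀ ω, (∑ j, c * P ω j) ^ 2 = ∑ j, ∑ k, c ^ 2 * (P ω j * P ω k) := by
    intro ω
    rw [sq, Finset.sum_mul_sum]
    exact Finset.sum_congr rfl fun j _ => Finset.sum_congr rfl fun k _ => by ring
  have hS2int : Integrable (fun ω => (∑ j, c * P ω j) ^ 2) μ := by
    simp_rw [expand]
    exact integrable_finset_sum _ fun j _ => integrable_finset_sum _ fun k _ =>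
      (hPPint j k).const_mul _
  have hES2 : ∫ ω, (∑ j, c * P ω j) ^ 2 ∂μ = c ^ 2 * (d * (d + 1) / 4) := by
    simp_rw [expand]
    rw [integral_finset_sum _ fun j _ => integrable_finset_sum _ fun k _ =>
      (hPPint j k).const_mul _]
    have inner : ∀ j : Fin d, ∫ ω, ∑ k, c ^ 2 * (P ω j * P ω k) ∂μ = c ^ 2 * ((d + 1) / 4) := by
      intro j
      rw [integral_finset_sum _ fun k _ => (hPPint j k).const_mul _]
      simp_rw [integral_const_mul, hEPP]
      have : ∀ k : Fin d, c ^ 2 * (if j = k then (1 / 2 : ℝ) else 1 / 4)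
          = (if j = k then c ^ 2 * (1 / 4 : ℝ) else 0) + c ^ 2 * (1 / 4) := by
        intro k; split <;> ring
      simp_rw [this, Finset.sum_add_distrib, Finset.sum_ite_eq, Finset.mem_univ, if_true,
        Finset.sum_const, Finset.card_univ, Fintype.card_fin, nsmul_eq_mul]
      ring
    simp_rw [inner]
    rw [Finset.sum_const, Finset.card_univ, Fintype.card_fin, nsmul_eq_mul]
    ring
  have hGP : ∫ ω, (1 - ∑ j, c * P ω j) ^ 2 ∂μ = 1 / (d : ℝ) := by
    have h1 : ∫ ω, (1 - ∑ j, c * P ω j) ^ 2 ∂μ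
        = ∫ ω, ((1 - 2 * ∑ j, c * P ω j) + (∑ j, c * P ω j) ^ 2) ∂μ :=
      integral_congr_ae (Filter.Eventually.of_forall fun ω => by ring)
    have hf1 : Integrable (fun ω => 1 - 2 * ∑ j, c * P ω j) μ :=
      (integrable_const (1 : ℝ)).sub (hSint.const_mul 2)
    have step1 : ∫ ω, ((1 - 2 * ∑ j, c * P ω j) + (∑ j, c * P ω j) ^ 2) ∂μ
        = (∫ ω, (1 - 2 * ∑ j, c * P ω j) ∂μ) + ∫ ω, (∑ j, c * P ω j) ^ 2 ∂μ :=
      integral_add hf1 hS2int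
    have step2 : ∫ ω, (1 - 2 * ∑ j, c * P ω j) ∂μ
        = (∫ _ω, (1 : ℝ) ∂μ) - ∫ ω, 2 * ∑ j, c * P ω j ∂μ :=
      integral_sub (integrable_const 1) (hSint.const_mul 2)
    have step3 : ∫ ω, 2 * ∑ j, c * P ω j ∂μ = 2 * ∫ ω, ∑ j, c * P ω j ∂μ :=
      integral_const_mul 2 _
    rw [h1, step1, step2, step3, hES, hES2, integral_const]
    simp only [measure_univ, probReal_univ, ENNReal.toReal_one, smul_eq_mul, one_mul, mul_one]
    rw [hc]
    field_simp
    ring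
  rw [key, hmul, hX2, hGP, one_mul]
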